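/- Let $U, V$ be Hilbert spaces, $B' \in \mathcal{L}(V,U)$ boundedly invertible with the optimal test inner product $\langle v,w\rangle_{V,\mathrm{opt}} = \langle B'v,B'w\rangle_U$ on $V$, and let $U^\delta \subseteq U$, $V^\delta \subseteq V$ be finite-dimensional subspaces such that $\gamma^\delta := \inf_{0\neq u^\delta \in U^\delta}\sup_{0\neq v^\delta \in V^\delta} \frac{|\langle u^\delta, B'v^\delta\rangle_U|}{\|u^\delta\|_U\|B'v^\delta\|_U} > 0$. For $u \in U$ with $q := Bu \in V'$, let $(v^\delta, u^\delta) \in V^\delta \times U^\delta$ solve the saddle point problem: $\langle B'v^\delta, B'\tilde v^\delta\rangle_U + \langle u^\delta, B'\tilde v^\delta\rangle_U = \langle u, B'\tilde v^\delta\rangle_U$ for all $\tilde v^\delta \in V^\delta$, and $\langle B'v^\delta, \tilde u^\delta\rangle_U = 0$ for all $\tilde u^\delta \in U^\delta$. Then for every $u \in U$, $\|u - u^\delta\|_U \leq \frac{1}{\gamma^\delta} \inf_{\tilde u^\delta \in U^\delta} \|u - \tilde u^\delta\|_U$. -/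

import Mathlib

open scoped InnerProductSpace

private lemma aux_quad (γ a b c : ℝ) (ha : 0 ≤ a) (hb : 0 ≤ b) (hc : 0 ≤ c)
    (hγ0 : 0 ≤ γ) (hγ1 : γ ≤ 1) (h : c^2 ≤ (1-γ^2)*b^2) :
    γ^2*a^2 ≤ a^2 + b^2 - 2*(a*c) := by
  set s : ℝ := Real.sqrt (1 - γ^2) with hs
  have hs0 : 0 ≤ s := Real.sqrt_nonneg _
  have hs2 : s^2 = 1 - γ^2 := Real.sq_sqrt (by nlinarith)
  have hcsb : c ≤ s * b := by
    have h1 : c^2 ≤ (s*b)^2 := by rw [mul_pow, hs2]; linarith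
    exact (pow_le_pow_iff_left₀ hc (mul_nonneg hs0 hb) two_ne_zero).mp h1
  have hac : a * c ≤ s * a * b := by
    calc a * c ≤ a * (s * b) := mul_le_mul_of_nonneg_left hcsb ha
    _ = s * a * b := by ring
  nlinarith [sq_nonneg (s*a - b)]

/-- quasi-optimality of the practical ultra-weak FOSLS method. If `(vδ, uδ)`
solves the discrete saddle point problem with data `q = Bu`, and the discrete inf-sup
constant `γδ` is positive, then `‖u - uδ‖ ≤ (1/γδ)·inf_{ũ∈Uδ} ‖u - ũ‖`. -/
theorem practical_FOSLS_quasi_optimality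
    {U V : Type*}
    [NormedAddCommGroup U] [InnerProductSpace ℂ U] [CompleteSpace U]
    [NormedAddCommGroup V] [InnerProductSpace ℂ V] [CompleteSpace V]
    (B' : V ≃L[ℂ] U)
    (Uδ : Submodule ℂ U) (Vδ : Submodule ℂ V)
    [FiniteDimensional ℂ Uδ] [FiniteDimensional ℂ Vδ]
    (γδ : ℝ)
    (hγdef : γδ = ⨅ u : {u : Uδ // (u : U) ≠ 0}, ⨆ v : {v : Vδ // (v : V) ≠ 0},
        ‖(⟪((u : Uδ) : U), B' ((v : Vδ) : V)⟫_ℂ : ℂ)‖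
          / (‖((u : Uδ) : U)‖ * ‖B' ((v : Vδ) : V)‖))
    (hγpos : 0 < γδ)
    (u : U) (vδ : V) (uδ : U) (hvδ : vδ ∈ Vδ) (huδ : uδ ∈ Uδ)
    (hsaddle1 : ∀ w ∈ Vδ, ⟪B' vδ, B' w⟫_ℂ + ⟪uδ, B' w⟫_ℂ = ⟪u, B' w⟫_ℂ)
    (hsaddle2 : ∀ z ∈ Uδ, (⟪B' vδ, z⟫_ℂ : ℂ) = 0) :
    ‖u - uδ‖ ≤ (1 / γδ) * ⨅ w : Uδ, ‖u - (w : U)‖ := by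
  classical
  set W : Submodule ℂ U := Vδ.map (B'.toLinearEquiv.toLinearMap) with hWdef
  haveI : FiniteDimensional ℂ W := Module.Finite.map Vδ _
  set Q : U → U := fun y => (W.starProjection y : U) with hQdef
  -- Pythagoras
  have hpyth : ∀ y : U, ‖Q y‖^2 + ‖y - Q y‖^2 = ‖y‖^2 := by
    intro y
    have h0 : (⟪Q y, y - Q y⟫_ℂ) = 0 := by
      rw [← inner_conj_symm]
      rw [Submodule.starProjection_inner_eq_zero (K := W) y _ (W.starProjection_apply_mem y)]
      simp
    have := norm_add_sq (𝕜 := ℂ) (Q y) (y - Q y)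
    simp only [hQdef] at this h0 ⊢
    simp [h0] at this
    linarith
  have hQle : ∀ y : U, ‖Q y‖ ≤ ‖y‖ := by
    intro y
    have := hpyth y
    nlinarith [norm_nonneg (Q y), norm_nonneg y, sq_nonneg ‖y - Q y‖]
  -- index types nonempty
  haveI hNU : Nonempty {z : Uδ // (z : U) ≠ 0} := by
    by_contra h
    rw [not_nonempty_iff] at h
    rw [Real.iInf_of_isEmpty] at hγdef
    exact absurd hγdef (by linarith)
  haveI hNV : Nonempty {v : Vδ // (v : V) ≠ 0} := by
    by_contra h
    rw [not_nonempty_iff] at h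
    simp only [Real.iSup_of_isEmpty, ciInf_const] at hγdef
    exact absurd hγdef (by linarith)
  -- key1 : inf-sup implies γδ‖z‖ ≤ ‖Qz‖ on Uδ
  have key1 : ∀ z ∈ Uδ, γδ * ‖z‖ ≤ ‖Q z‖ := by
    intro z hz
    rcases eq_or_ne z 0 with rfl | hz0
    · simp
    have hzn : 0 < ‖z‖ := norm_pos_iff.mpr hz0
    have hbdd : BddBelow (Set.range fun u : {u : Uδ // (u : U) ≠ 0} =>
        ⨆ v : {v : Vδ // (v : V) ≠ 0},
          ‖(⟪((u : Uδ) : U), B' ((v : Vδ) : V)⟫_ℂ : ℂ)‖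
            / (‖((u : Uδ) : U)‖ * ‖B' ((v : Vδ) : V)‖)) := by
      refine ⟨0, ?_⟩
      rintro x ⟨i, rfl⟩
      exact Real.iSup_nonneg fun v => div_nonneg (norm_nonneg _)
        (mul_nonneg (norm_nonneg _) (norm_nonneg _))
    have h1 : γδ ≤ ⨆ v : {v : Vδ // (v : V) ≠ 0},
        ‖(⟪z, B' ((v : Vδ) : V)⟫_ℂ : ℂ)‖ / (‖z‖ * ‖B' ((v : Vδ) : V)‖) := by
      rw [hγdef]
      exact ciInf_le hbdd ⟨⟨z, hz⟩, hz0⟩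
    have h2 : (⨆ v : {v : Vδ // (v : V) ≠ 0},
        ‖(⟪z, B' ((v : Vδ) : V)⟫_ℂ : ℂ)‖ / (‖z‖ * ‖B' ((v : Vδ) : V)‖)) ≤ ‖Q z‖ / ‖z‖ := by
      apply Real.iSup_le _ (div_nonneg (norm_nonneg _) (norm_nonneg _))
      intro v
      have hBv : B' ((v : Vδ) : V) ≠ 0 := by
        intro h
        exact v.2 (by simpa using congrArg B'.symm h)
      have hBvn : 0 < ‖B' ((v : Vδ) : V)‖ := norm_pos_iff.mpr hBv
      have hmem : B' ((v : Vδ) : V) ∈ W := ⟨((v : Vδ) : V), (v : Vδ).2, rfl⟩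
      have hinner : (⟪z, B' ((v : Vδ) : V)⟫_ℂ : ℂ) = ⟪Q z, B' ((v : Vδ) : V)⟫_ℂ := by
        have hself : (W.starProjection (B' ((v : Vδ) : V)) : U) = B' ((v : Vδ) : V) := by
          rw [Submodule.starProjection_eq_self_iff]
          exact hmem
        calc (⟪z, B' ((v : Vδ) : V)⟫_ℂ : ℂ)
            = ⟪z, (W.starProjection (B' ((v : Vδ) : V)) : U)⟫_ℂ := by rw [hself]
          _ = ⟪Q z, B' ((v : Vδ) : V)⟫_ℂ :=
              (Submodule.inner_starProjection_left_eq_right W z (B' ((v : Vδ) : V))).symm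
      rw [hinner, div_le_div_iff₀ (by positivity) hzn]
      calc ‖(⟪Q z, B' ((v : Vδ) : V)⟫_ℂ : ℂ)‖ * ‖z‖
          ≤ ‖Q z‖ * ‖B' ((v : Vδ) : V)‖ * ‖z‖ :=
            mul_le_mul_of_nonneg_right (norm_inner_le_norm _ _) (norm_nonneg _)
        _ = ‖Q z‖ * (‖z‖ * ‖B' ((v : Vδ) : V)‖) := by ring
    have := h1.trans h2
    rw [le_div_iff₀ hzn] at this
    linarith
  -- γδ ≤ 1
  have hγ1 : γδ ≤ 1 := by
    obtain ⟨z⟩ := hNU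
    have hzn : 0 < ‖(z : U)‖ := norm_pos_iff.mpr z.2
    have := (key1 (z : U) (z.1).2).trans (hQle (z : U))
    nlinarith
  -- key2 : Q (u - uδ) = B' vδ
  have key2 : Q (u - uδ) = B' vδ := by
    apply Submodule.eq_starProjection_of_mem_of_inner_eq_zero
    · exact ⟨vδ, hvδ, rfl⟩
    · rintro w ⟨w', hw', rfl⟩
      have h := hsaddle1 w' hw'
      rw [inner_sub_left, inner_sub_left]
      show ⟪u, B' w'⟫_ℂ - ⟪uδ, B' w'⟫_ℂ - ⟪B' vδ, B' w'⟫_ℂ = 0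
      linear_combination -h
  -- key3 : ⟪u - uδ, Q z⟫ = 0 for z ∈ Uδ
  have key3 : ∀ z ∈ Uδ, (⟪u - uδ, Q z⟫_ℂ : ℂ) = 0 := by
    intro z hz
    have : (⟪Q (u - uδ), z⟫_ℂ : ℂ) = ⟪u - uδ, Q z⟫_ℂ :=
      Submodule.inner_starProjection_left_eq_right W (u - uδ) z
    rw [← this, key2]
    exact hsaddle2 z hz
  -- main estimate
  have hmain : ∀ w : Uδ, γδ * ‖u - uδ‖ ≤ ‖u - (w : U)‖ := by
    intro w
    set e : U := u - uδ with he
    set z : U := uδ - (w : U) with hzdef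
    have hzmem : z ∈ Uδ := Uδ.sub_mem huδ w.2
    have hsplit : u - (w : U) = e + z := by rw [he, hzdef]; abel
    have hnorm : ‖u - (w : U)‖^2 = ‖e‖^2 + 2 * Complex.re (⟪e, z⟫_ℂ : ℂ) + ‖z‖^2 := by
      rw [hsplit]; exact norm_add_sq (𝕜 := ℂ) e z
    have hiz : (⟪e, z⟫_ℂ : ℂ) = ⟪e, z - Q z⟫_ℂ := by
      have h := inner_sub_right (𝕜 := ℂ) e z (Q z)
      rw [key3 z hzmem, sub_zero] at h
      exact h.symm
    have hre : -( ‖e‖ * ‖z - Q z‖) ≤ Complex.re (⟪e, z⟫_ℂ : ℂ) := by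
      rw [hiz]
      have h1 : |Complex.re (⟪e, z - Q z⟫_ℂ : ℂ)| ≤ ‖(⟪e, z - Q z⟫_ℂ : ℂ)‖ :=
        Complex.abs_re_le_norm _
      have h2 : ‖(⟪e, z - Q z⟫_ℂ : ℂ)‖ ≤ ‖e‖ * ‖z - Q z‖ := norm_inner_le_norm _ _
      have := abs_le.mp (h1.trans h2)
      linarith [this.1]
    have hc2 : ‖z - Q z‖^2 ≤ (1 - γδ^2) * ‖z‖^2 := by
      have hp := hpyth z
      have hk := key1 z hzmem
      have : (γδ * ‖z‖)^2 ≤ ‖Q z‖^2 := by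
        apply pow_le_pow_left₀ (mul_nonneg hγpos.le (norm_nonneg _)) hk
      nlinarith
    have hquad := aux_quad γδ ‖e‖ ‖z‖ ‖z - Q z‖ (norm_nonneg _) (norm_nonneg _)
      (norm_nonneg _) hγpos.le hγ1 hc2
    have hsq : (γδ * ‖e‖)^2 ≤ ‖u - (w : U)‖^2 := by
      rw [hnorm]; nlinarith
    exact (pow_le_pow_iff_left₀ (mul_nonneg hγpos.le (norm_nonneg _)) (norm_nonneg _)
      two_ne_zero).mp hsq
  have hinf : γδ * ‖u - uδ‖ ≤ ⨅ w : Uδ, ‖u - (w : U)‖ := le_ciInf hmain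
  calc ‖u - uδ‖ = (1 / γδ) * (γδ * ‖u - uδ‖) := by field_simp
    _ ≤ (1 / γδ) * ⨅ w : Uδ, ‖u - (w : U)‖ :=
        mul_le_mul_of_nonneg_left hinf (by positivity)
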